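/- Explicit formula for the relative entropy of two rebit states: let 0 ≤ r_s < 1, 0 < r_t < 1 and θ_s, θ_t ∈ ℝ. For r ∈ (0,1) set L(r,θ) := (1/2)·log₂((1−r²)/4)·Id₂ + (1/2)·log₂((1+r)/(1−r))·(cos θ · σ₁ + sin θ · σ₂); then exp((log 2)·L(r,θ)) = ρ(r,θ) (so L(r,θ) = log₂ ρ(r,θ)), and the relative entropy R(ρ(r_s,θ_s) ‖ ρ(r_t,θ_t)) := Tr( ρ(r_s,θ_s)·L(r_s,θ_s) − ρ(r_s,θ_s)·L(r_t,θ_t) ) equals (1/2)log₂(1−r_s²) + (r_s/2)log₂((1+r_s)/(1−r_s)) − (1/2)log₂(1−r_t²) − (r_s cos(θ_s−θ_t)/2)·log₂((1+r_t)/(1−r_t)). (For r_s = 0 take L(0,θ) := −Id₂.) -/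

import Mathlib

/-- The density matrix `ρ(r,θ)`. -/
noncomputable def rho (r θ : ℝ) : Matrix (Fin 2) (Fin 2) ℝ :=
  (1 / 2 : ℝ) •
    !![1 + r * Real.cos θ, r * Real.sin θ; r * Real.sin θ, 1 - r * Real.cos θ]

/-- The real Pauli matrix `σ₁`. -/
def sigma1 : Matrix (Fin 2) (Fin 2) ℝ := !![1, 0; 0, -1]

/-- The real Pauli matrix `σ₂`. -/
def sigma2 : Matrix (Fin 2) (Fin 2) ℝ := !![0, 1; 1, 0]

/-- `L(r,θ) = log₂ ρ(r,θ)` written explicitly; for `r = 0` this gives `−Id₂`. -/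
noncomputable def Lmat (r θ : ℝ) : Matrix (Fin 2) (Fin 2) ℝ :=
  ((1 / 2) * Real.logb 2 ((1 - r ^ 2) / 4)) • (1 : Matrix (Fin 2) (Fin 2) ℝ) +
    ((1 / 2) * Real.logb 2 ((1 + r) / (1 - r))) •
      (Real.cos θ • sigma1 + Real.sin θ • sigma2)

open Matrix in
lemma exp_Lmat (r θ : ℝ) (hr : r ∈ Set.Ioo (0 : ℝ) 1) :
    NormedSpace.exp ((Real.log 2) • Lmat r θ) = rho r θ := by
  obtain ⟨hr0, hr1⟩ := hr
  set c := Real.cos (θ / 2) with hc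
  set s := Real.sin (θ / 2) with hs
  set x := Real.log ((1 + r) / 2) with hxdef
  set y := Real.log ((1 - r) / 2) with hydef
  set U : Matrix (Fin 2) (Fin 2) ℝ := !![c, -s; s, c] with hU
  set V : Matrix (Fin 2) (Fin 2) ℝ := !![c, s; -s, c] with hV
  have hcs : c ^ 2 + s ^ 2 = 1 := by
    rw [hc, hs]; rw [add_comm]; exact Real.sin_sq_add_cos_sq _
  have hUV : U * V = 1 := by
    ext i j
    fin_cases i <;> fin_cases j <;>
      simp [hU, hV, Matrix.mul_apply, Fin.sum_univ_two] <;> nlinarith [hcs]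
  have hVU : V * U = 1 := by
    ext i j
    fin_cases i <;> fin_cases j <;>
      simp [hU, hV, Matrix.mul_apply, Fin.sum_univ_two] <;> nlinarith [hcs]
  have hUinv : U⁻¹ = V := Matrix.inv_eq_right_inv hUV
  have hUunit : IsUnit U := by
    refine (Matrix.isUnit_iff_isUnit_det _).mpr ?_
    have : U.det = 1 := by simp [hU, Matrix.det_fin_two_of]; nlinarith [hcs]
    rw [this]; exact isUnit_one
  have h1r : (0:ℝ) < 1 + r := by linarith
  have h1r' : (0:ℝ) < 1 - r := by linarith
  have hcosθ : Real.cos θ = c ^ 2 - s ^ 2 := by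
    rw [hc, hs]
    have : θ = 2 * (θ / 2) := by ring
    rw [this, Real.cos_two_mul']; ring
  have hsinθ : Real.sin θ = 2 * s * c := by
    rw [hc, hs]
    have : θ = 2 * (θ / 2) := by ring
    rw [this, Real.sin_two_mul]; ring
  have hlog1 : Real.log 2 * Real.logb 2 ((1 - r ^ 2) / 4) = x + y := by
    rw [Real.logb, hxdef, hydef]
    rw [mul_div_cancel₀ _ (by positivity : Real.log 2 ≠ 0)]
    rw [← Real.log_mul (by positivity) (by positivity)]
    congr 1; ring
  have hlog2 : Real.log 2 * Real.logb 2 ((1 + r) / (1 - r)) = x - y := by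
    rw [Real.logb, hxdef, hydef]
    rw [mul_div_cancel₀ _ (by positivity : Real.log 2 ≠ 0)]
    rw [← Real.log_div (by positivity) (by positivity)]
    congr 1
    field_simp
  have hdiag : Matrix.diagonal ![x, y] = !![x, 0; 0, y] := by
    ext i j
    fin_cases i <;> fin_cases j <;> simp [Matrix.diagonal]
  have hD : (Real.log 2) • Lmat r θ = U * (Matrix.diagonal ![x, y]) * U⁻¹ := by
    rw [hUinv, hdiag]
    ext i j
    fin_cases i <;> fin_cases j <;>
      simp [Lmat, sigma1, sigma2, hU, hV, Matrix.mul_apply, Fin.sum_univ_two,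
        Matrix.one_apply]
    · linear_combination (1/2)*hlog1 + (Real.cos θ/2)*hlog2 + ((x-y)/2)*hcosθ - ((x+y)/2)*hcs
    · linear_combination (Real.sin θ/2)*hlog2 + ((x-y)/2)*hsinθ
    · linear_combination (Real.sin θ/2)*hlog2 + ((x-y)/2)*hsinθ
    · linear_combination (1/2)*hlog1 - (Real.cos θ/2)*hlog2 - ((x-y)/2)*hcosθ - ((x+y)/2)*hcs
  rw [hD, hUinv]
  rw [← hUinv]
  refine Eq.trans (Matrix.exp_conj U (Matrix.diagonal ![x, y]) hUunit) ?_
  rw [Matrix.exp_diagonal, hUinv]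
  have hexp : NormedSpace.exp (![x, y]) = ![(1 + r)/2, (1 - r)/2] := by
    funext i
    rw [Pi.coe_exp]
    fin_cases i <;> simp [hxdef, hydef, ← Real.exp_eq_exp_ℝ]
    · exact Real.exp_log (by linarith)
    · exact Real.exp_log (by linarith)
  rw [hexp]
  have hdiag2 : Matrix.diagonal ![(1 + r)/2, (1 - r)/2] = !![(1 + r)/2, 0; 0, (1 - r)/2] := by
    ext i j
    fin_cases i <;> fin_cases j <;> simp [Matrix.diagonal]
  rw [hdiag2]
  ext i j
  fin_cases i <;> fin_cases j <;>
    simp [rho, hU, hV, Matrix.mul_apply, Fin.sum_univ_two]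
  · linear_combination -(r/2)*hcosθ + (1/2)*hcs
  · linear_combination -(r/2)*hsinθ
  · linear_combination -(r/2)*hsinθ
  · linear_combination (r/2)*hcosθ + (1/2)*hcs


/-- Explicit formula for the relative entropy of two rebit states: `L(r,θ)` is the
base-2 matrix logarithm of `ρ(r,θ)` (i.e. `exp((log 2)·L(r,θ)) = ρ(r,θ)`), and
`R(ρ(r_s,θ_s)‖ρ(r_t,θ_t)) = Tr(ρ_s L_s − ρ_s L_t)` equals
`(1/2)log₂(1−r_s²) + (r_s/2)log₂((1+r_s)/(1−r_s)) − (1/2)log₂(1−r_t²)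
 − (r_s cos(θ_s−θ_t)/2)·log₂((1+r_t)/(1−r_t))`. -/
theorem relativeEntropy_formula (rs rt θs θt : ℝ)
    (hrs : rs ∈ Set.Ico (0 : ℝ) 1) (hrt : rt ∈ Set.Ioo (0 : ℝ) 1) :
    (∀ r ∈ Set.Ioo (0 : ℝ) 1, ∀ θ : ℝ,
      NormedSpace.exp ((Real.log 2) • Lmat r θ) = rho r θ) ∧
    (rho rs θs * Lmat rs θs - rho rs θs * Lmat rt θt).trace =
      (1 / 2) * Real.logb 2 (1 - rs ^ 2)
        + (rs / 2) * Real.logb 2 ((1 + rs) / (1 - rs))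
        - (1 / 2) * Real.logb 2 (1 - rt ^ 2)
        - (rs * Real.cos (θs - θt) / 2) * Real.logb 2 ((1 + rt) / (1 - rt)) := by
  constructor
  · intro r hr θ
    exact exp_Lmat r θ hr
  · have hrs1 : rs < 1 := hrs.2
    have hrt0 : (0:ℝ) < rt := hrt.1
    have hrt1 : rt < 1 := hrt.2
    have hrs0 : (0:ℝ) ≤ rs := hrs.1
    have hs2 : (0:ℝ) < 1 - rs ^ 2 := by nlinarith
    have ht2 : (0:ℝ) < 1 - rt ^ 2 := by nlinarith
    have hlogb4 : Real.logb 2 (4:ℝ) = 2 := by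
      rw [show (4:ℝ) = 2 ^ (2:ℕ) by norm_num, Real.logb_pow, Real.logb_self_eq_one] <;> norm_num
    have h4s : Real.logb 2 ((1 - rs ^ 2) / 4) = Real.logb 2 (1 - rs ^ 2) - 2 := by
      rw [Real.logb_div (ne_of_gt hs2) (by norm_num), hlogb4]
    have h4t : Real.logb 2 ((1 - rt ^ 2) / 4) = Real.logb 2 (1 - rt ^ 2) - 2 := by
      rw [Real.logb_div (ne_of_gt ht2) (by norm_num), hlogb4]
    have hcos : Real.cos (θs - θt) = Real.cos θs * Real.cos θt + Real.sin θs * Real.sin θt :=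
      Real.cos_sub θs θt
    have hL : ∀ r θ : ℝ, Lmat r θ =
        !![(1/2) * Real.logb 2 ((1 - r ^ 2) / 4)
            + (1/2) * Real.logb 2 ((1 + r) / (1 - r)) * Real.cos θ,
          (1/2) * Real.logb 2 ((1 + r) / (1 - r)) * Real.sin θ;
          (1/2) * Real.logb 2 ((1 + r) / (1 - r)) * Real.sin θ,
          (1/2) * Real.logb 2 ((1 - r ^ 2) / 4)
            - (1/2) * Real.logb 2 ((1 + r) / (1 - r)) * Real.cos θ] := by
      intro r θ
      ext i j
      fin_cases i <;> fin_cases j <;>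
        simp [Lmat, sigma1, sigma2, Matrix.one_apply] <;> ring
    rw [hL, hL]
    simp [rho, Matrix.trace_fin_two, Matrix.mul_apply, Fin.sum_univ_two]
    have hpyth : Real.sin θs ^ 2 + Real.cos θs ^ 2 = 1 := Real.sin_sq_add_cos_sq θs
    linear_combination (1/2)*h4s - (1/2)*h4t
      + (rs/2 * Real.logb 2 ((1+rt)/(1-rt)))*hcos
      + (rs/2 * Real.logb 2 ((1+rs)/(1-rs)))*hpyth
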